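/- Product of several Lucas-Pantograph exponentials: let u₁, …, u_m ∈ ℂ be nonzero and x ∈ ℂ, and assume the series defining exp_{s,t}(x, u_j) converges absolutely for each 1 ≤ j ≤ m. Then the series Σ_{n=0}^{∞} m̄_{(u₁,…,u_m)}^{(n)}·xⁿ/{n}_{s,t}! converges and ∏_{j=1}^{m} exp_{s,t}(x, u_j) = Σ_{n=0}^{∞} m̄_{(u₁,…,u_m)}^{(n)}·xⁿ/{n}_{s,t}!. -/

import Mathlib

open scoped BigOperators

noncomputable section

/-- The Lucas sequence `{n}_{s,t}`. -/
def lucasSeq (s t : ℂ) : ℕ → ℂ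
  | 0 => 0
  | 1 => 1
  | n + 2 => s * lucasSeq s t (n + 1) + t * lucasSeq s t n

/-- The Lucastorial `{n}_{s,t}!`. -/
def lucasFact (s t : ℂ) : ℕ → ℂ
  | 0 => 1
  | n + 1 => lucasFact s t n * lucasSeq s t (n + 1)

/-- The Lucasnomial coefficient `{n choose k}_{s,t}`. -/
def lucasBinom (s t : ℂ) (n k : ℕ) : ℂ :=
  lucasFact s t n / (lucasFact s t k * lucasFact s t (n - k))

/-- The `(u,v)`-deformed Lucasnomial power `(x ⊕_{u,v} y)^{(n)}`. -/
def lucasPow (s t u v x y : ℂ) (n : ℕ) : ℂ :=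
  ∑ k ∈ Finset.range (n + 1),
    lucasBinom s t n k * u ^ ((n - k).choose 2) * v ^ (k.choose 2) * x ^ (n - k) * y ^ k

/-- The Lucas-derivative with respect to the roots `p = φ`, `q = φ'`. -/
def lucasDeriv (p q : ℂ) (f : ℂ → ℂ) (x : ℂ) : ℂ :=
  (f (p * x) - f (q * x)) / ((p - q) * x)

/-- The Lucas-derivative, extended by `0` at `0`, as an operator suitable for iteration. -/
def lucasDeriv0 (p q : ℂ) (f : ℂ → ℂ) : ℂ → ℂ :=
  fun x => if x = 0 then 0 else (f (p * x) - f (q * x)) / ((p - q) * x)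

/-- The Lucas-Pantograph exponential `exp_{s,t}(z,u)`. -/
def lucasExp (s t u z : ℂ) : ℂ :=
  ∑' n : ℕ, u ^ (n.choose 2) * z ^ n / lucasFact s t n

/-- The Lucas-Pantograph sine `sin_{s,t}(z,u)`. -/
def lucasSin (s t u z : ℂ) : ℂ :=
  ∑' n : ℕ, (-1 : ℂ) ^ n * u ^ ((2 * n + 1).choose 2) * z ^ (2 * n + 1) / lucasFact s t (2 * n + 1)

/-- The Lucas-Pantograph cosine `cos_{s,t}(z,u)`. -/
def lucasCos (s t u z : ℂ) : ℂ :=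
  ∑' n : ℕ, (-1 : ℂ) ^ n * u ^ ((2 * n).choose 2) * z ^ (2 * n) / lucasFact s t (2 * n)

/-- The `u`-deformed Lucasnomial numbers `m̄_{(u₁,…,u_m)}^{(n)}`. -/
def lucasMultiNum (s t : ℂ) (m : ℕ) (u : Fin m → ℂ) (n : ℕ) : ℂ :=
  ∑ k ∈ Finset.Nat.antidiagonalTuple m n,
    (lucasFact s t n / ∏ j, lucasFact s t (k j)) * ∏ j, (u j) ^ ((k j).choose 2)


set_option linter.deprecated false in
theorem pi_hasSum' (m : ℕ) (f : Fin m → ℕ → ℂ)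
    (hf : ∀ j, Summable fun n => ‖f j n‖) :
    Summable (fun k : (Fin m → ℕ) => ‖∏ j, f j (k j)‖) ∧
      HasSum (fun k : (Fin m → ℕ) => ∏ j, f j (k j)) (∏ j, ∑' n, f j n) := by
  induction m with
  | zero =>
    refine ⟨Summable.of_finite, ?_⟩
    simpa using hasSum_fintype (fun k : (Fin 0 → ℕ) => ∏ j, f j (k j))
  | succ m ih =>
    obtain ⟨ihs, ihh⟩ := ih (fun j => f j.succ) (fun j => hf j.succ)
    have key : (fun k : Fin (m+1) → ℕ => ∏ j, f j (k j))
        = (fun p : ℕ × (Fin m → ℕ) => f 0 p.1 * ∏ j, f j.succ (p.2 j)) ∘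
          (Fin.consEquiv (fun _ : Fin (m+1) => ℕ)).symm := by
      funext k
      simp [Fin.consEquiv, Fin.prod_univ_succ, Fin.tail]
    have hsum2 : Summable fun p : ℕ × (Fin m → ℕ) =>
        ‖f 0 p.1 * ∏ j, f j.succ (p.2 j)‖ := by
      have := Summable.mul_norm (hf 0) ihs
      exact this
    have hmul : HasSum (fun p : ℕ × (Fin m → ℕ) => f 0 p.1 * ∏ j, f j.succ (p.2 j))
        ((∑' n, f 0 n) * ∏ j : Fin m, ∑' n, f j.succ n) := by
      have := HasSum.mul ((hf 0).of_norm.hasSum) ihh hsum2.of_norm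
      exact this
    constructor
    · rw [show (fun k : Fin (m+1) → ℕ => ‖∏ j, f j (k j)‖)
          = (fun p : ℕ × (Fin m → ℕ) => ‖f 0 p.1 * ∏ j, f j.succ (p.2 j)‖) ∘
            (Fin.consEquiv (fun _ : Fin (m+1) => ℕ)).symm from funext fun k => congrArg norm (congrFun key k)]
      exact hsum2.comp_injective (Fin.consEquiv (fun _ : Fin (m+1) => ℕ)).symm.injective
    · rw [key, Fin.prod_univ_succ]
      exact (Fin.consEquiv (fun _ : Fin (m+1) => ℕ)).symm.hasSum_iff.mpr hmul

theorem lucasFact_ne_zero' (s t : ℂ) (hL : ∀ n : ℕ, 1 ≤ n → lucasSeq s t n ≠ 0) :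
    ∀ n, lucasFact s t n ≠ 0 := by
  intro n
  induction n with
  | zero => simp [lucasFact]
  | succ n ih =>
    rw [lucasFact]
    exact mul_ne_zero ih (hL (n+1) (Nat.le_add_left 1 n))

/-- Product of several Lucas-Pantograph exponentials. -/
theorem lucasExp_prod (s t : ℂ) (hs : s ≠ 0) (ht : t ≠ 0)
    (hL : ∀ n : ℕ, 1 ≤ n → lucasSeq s t n ≠ 0)
    (m : ℕ) (u : Fin m → ℂ) (hu : ∀ j, u j ≠ 0) (x : ℂ)
    (hconv : ∀ j, Summable fun n : ℕ =>
      ‖(u j) ^ (n.choose 2) * x ^ n / lucasFact s t n‖) :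
    HasSum (fun n : ℕ => lucasMultiNum s t m u n * x ^ n / lucasFact s t n)
      (∏ j, lucasExp s t (u j) x) := by
  classical
  set f : Fin m → ℕ → ℂ := fun j n => (u j) ^ (n.choose 2) * x ^ n / lucasFact s t n with hf
  have hfac := lucasFact_ne_zero' s t hL
  obtain ⟨-, hpi⟩ := pi_hasSum' m f hconv
  have hprod : (∏ j, ∑' n, f j n) = ∏ j, lucasExp s t (u j) x := rfl
  rw [hprod] at hpi
  have hsig : HasSum ((fun k : Fin m → ℕ => ∏ j, f j (k j)) ∘
      (Finset.Nat.sigmaAntidiagonalTupleEquivTuple m)) (∏ j, lucasExp s t (u j) x) :=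
    (Finset.Nat.sigmaAntidiagonalTupleEquivTuple m).hasSum_iff.mpr hpi
  have hfib : ∀ n : ℕ, HasSum
      (fun k : (Finset.Nat.antidiagonalTuple m n : Finset (Fin m → ℕ)) => ∏ j, f j (k.1 j))
      (lucasMultiNum s t m u n * x ^ n / lucasFact s t n) := by
    intro n
    have h1 : HasSum
        (fun k : (Finset.Nat.antidiagonalTuple m n : Finset (Fin m → ℕ)) => ∏ j, f j (k.1 j))
        (∑ k ∈ Finset.Nat.antidiagonalTuple m n, ∏ j, f j (k j)) := by
      have := hasSum_fintype
        (fun k : (Finset.Nat.antidiagonalTuple m n : Finset (Fin m → ℕ)) => ∏ j, f j (k.1 j))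
      rwa [Finset.sum_coe_sort (Finset.Nat.antidiagonalTuple m n) (fun k => ∏ j, f j (k j))] at this
    have h2 : (∑ k ∈ Finset.Nat.antidiagonalTuple m n, ∏ j, f j (k j))
        = lucasMultiNum s t m u n * x ^ n / lucasFact s t n := by
      rw [lucasMultiNum, Finset.sum_mul, Finset.sum_div]
      refine Finset.sum_congr rfl fun k hk => ?_
      have hsum : ∑ j, k j = n := Finset.Nat.mem_antidiagonalTuple.mp hk
      have hxp : x ^ n = ∏ j, x ^ (k j) := by
        rw [Finset.prod_pow_eq_pow_sum, hsum]
      have hP : (∏ j, lucasFact s t (k j)) ≠ 0 :=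
        Finset.prod_ne_zero_iff.mpr fun j _ => hfac (k j)
      simp only [hf]
      rw [Finset.prod_div_distrib, Finset.prod_mul_distrib, ← hxp]
      field_simp [hfac n]
    rwa [h2] at h1
  exact HasSum.sigma hsig hfib
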